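/- Let G = (V,E) be a finite simple graph with minimum degree at least 1 and let k ≥ 4. Let G' be the incidence graph of G with threshold function thr' given by thr'(v) = deg_G(v) for every v ∈ V and thr'(e) = 2 for every e ∈ E. Then G contains a clique of size k if and only if there exists a set S ⊆ V ∪ E with |S| ≤ k such that |act¹(S) ∩ E| ≥ k(k−1)/2. -/

import Mathlib

-- arithmetic helpers
private lemma add_two_le_choose : ∀ {k : ℕ}, 4 ≤ k → k + 2 ≤ k.choose 2 := by
  intro k hk
  induction k with
  | zero => omega
  | succ m ih =>
    have pascal : (m+1).choose 2 = m + m.choose 2 := by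
      rw [Nat.choose_succ_succ, Nat.choose_one_right]
    rcases Nat.lt_or_ge m 4 with h | h
    · interval_cases m <;> simp_all [Nat.choose]
    · have := ih (by omega)
      omega

private lemma choose_two_lt {k a : ℕ} (hk : 4 ≤ k) (ha : a + 1 ≤ k) :
    k - a + a.choose 2 < k.choose 2 := by
  obtain ⟨m, rfl⟩ : ∃ m, k = m + 1 := ⟨k - 1, by omega⟩
  have pascal : (m+1).choose 2 = m + m.choose 2 := by
    rw [Nat.choose_succ_succ, Nat.choose_one_right]
  rcases le_or_gt a 2 with h2 | h3
  · have hc : a.choose 2 ≤ 1 := by interval_cases a <;> simp [Nat.choose]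
    have hk2 := add_two_le_choose hk
    omega
  · have h1 : a.choose 2 ≤ m.choose 2 := Nat.choose_le_choose 2 (by omega)
    omega

private lemma ncard_sym2_set {α : Type*} [Finite α] (W : Set α) :
    {z : Sym2 α | ¬ z.IsDiag ∧ ∀ y ∈ z, y ∈ W}.ncard = W.ncard.choose 2 := by
  classical
  have hinj : Function.Injective
      (fun z : {z : Sym2 W // ¬ z.IsDiag} => Sym2.map Subtype.val z.1) := by
    intro z w h
    exact Subtype.ext (Sym2.map.injective Subtype.val_injective h)
  have hrange : Set.range (fun z : {z : Sym2 W // ¬ z.IsDiag} => Sym2.map Subtype.val z.1)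
      = {z : Sym2 α | ¬ z.IsDiag ∧ ∀ y ∈ z, y ∈ W} := by
    ext z
    constructor
    · rintro ⟨⟨w, hw⟩, rfl⟩
      refine ⟨fun hd => hw ((Sym2.isDiag_map Subtype.val_injective).mp hd), ?_⟩
      intro y hy
      induction w using Sym2.ind with
      | _ u v =>
        simp only [Sym2.map_pair_eq, Sym2.mem_iff] at hy
        rcases hy with rfl | rfl
        · exact u.2
        · exact v.2
    · rintro ⟨hd, hmem⟩
      induction z using Sym2.ind with
      | _ u v =>
        refine ⟨⟨s(⟨u, hmem u (by simp)⟩, ⟨v, hmem v (by simp)⟩), ?_⟩, ?_⟩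
        · rw [Sym2.mk_isDiag_iff] at hd ⊢
          exact fun h => hd (congrArg Subtype.val h)
        · simp [Sym2.map_pair_eq]
  haveI : Fintype W := Fintype.ofFinite _
  rw [← hrange, ← Nat.card_coe_set_eq, Nat.card_range_of_injective hinj,
    Nat.card_eq_fintype_card, Sym2.card_subtype_not_diag]
  congr 1
  rw [← Nat.card_coe_set_eq, Nat.card_eq_fintype_card]



/-- One round of the activation process: a vertex becomes active if at least `thr v`
of its neighbors are active. -/
def actStep {V : Type*} (G : SimpleGraph V) (thr : V → ℕ) (S : Set V) : Set V :=
  S ∪ {v | thr v ≤ (G.neighborSet v ∩ S).ncard}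

/-- `actIter G thr i S` is the set of vertices active after `i` rounds starting from `S`. -/
def actIter {V : Type*} (G : SimpleGraph V) (thr : V → ℕ) : ℕ → Set V → Set V
  | 0, S => S
  | i + 1, S => actStep G thr (actIter G thr i S)

/-- The set of vertices eventually activated by `S`. -/
def act {V : Type*} (G : SimpleGraph V) (thr : V → ℕ) (S : Set V) : Set V :=
  ⋃ i, actIter G thr i S

/-- `S` is a target set if it eventually activates every vertex. -/
def IsTargetSet {V : Type*} (G : SimpleGraph V) (thr : V → ℕ) (S : Set V) : Prop :=
  act G thr S = Set.univ

/-- The incidence graph of `G`: bipartite graph on `V ⊕ E` where a vertex `v` is adjacent to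
an edge `e` iff `v` is an endpoint of `e`. -/
def incidenceGraph {V : Type*} (G : SimpleGraph V) : SimpleGraph (V ⊕ G.edgeSet) :=
  SimpleGraph.fromRel fun x y =>
    ∃ (v : V) (e : G.edgeSet), x = Sum.inl v ∧ y = Sum.inr e ∧ v ∈ (e : Sym2 V)


section main
variable {n : ℕ} (G : SimpleGraph (Fin n))

private lemma neighborSet_inr (e : G.edgeSet) :
    (incidenceGraph G).neighborSet (Sum.inr e) =
      Sum.inl '' {v : Fin n | v ∈ (e : Sym2 (Fin n))} := by
  ext x
  simp only [SimpleGraph.mem_neighborSet, incidenceGraph, SimpleGraph.fromRel_adj]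
  constructor
  · rintro ⟨hne, h | h⟩
    · obtain ⟨v, e', hv, _⟩ := h
      exact absurd hv (by simp)
    · obtain ⟨v, e', rfl, he, hv⟩ := h
      rw [Sum.inr.injEq] at he
      subst he
      exact ⟨v, hv, rfl⟩
  · rintro ⟨v, hv, rfl⟩
    exact ⟨by simp, Or.inr ⟨v, e, rfl, rfl, hv⟩⟩

private lemma ncard_endpoints (e : G.edgeSet) :
    {v : Fin n | v ∈ (e : Sym2 (Fin n))}.ncard = 2 := by
  obtain ⟨z, hz⟩ := e
  have hd := G.not_isDiag_of_mem_edgeSet hz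
  induction z using Sym2.ind with
  | _ u v =>
    rw [Sym2.mk_isDiag_iff] at hd
    have h1 : {x : Fin n | x ∈ ((⟨s(u, v), hz⟩ : G.edgeSet) : Sym2 (Fin n))} = {u, v} := by
      ext x; simp [Sym2.mem_iff]
    rw [h1]
    exact Set.ncard_pair hd

end main

theorem stmt5 (n k : ℕ) (G : SimpleGraph (Fin n))
    (hdeg : ∀ v, 1 ≤ (G.neighborSet v).ncard) (hk : 4 ≤ k) :
    (∃ K : Set (Fin n), K.ncard = k ∧ K.Pairwise G.Adj) ↔
    ∃ S : Set (Fin n ⊕ G.edgeSet), S.ncard ≤ k ∧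
      k * (k - 1) / 2 ≤
        (actIter (incidenceGraph G)
            (Sum.elim (fun v => (G.neighborSet v).ncard) (fun _ => 2)) 1 S ∩
          Set.range Sum.inr).ncard := by
  classical
  constructor
  · rintro ⟨K, hKcard, hKadj⟩
    have hKne : K.Nonempty := Set.nonempty_of_ncard_ne_zero (by omega)
    obtain ⟨v0, hv0⟩ := hKne
    refine ⟨Sum.inl '' K,
      by rw [Set.ncard_image_of_injective _ Sum.inl_injective, hKcard], ?_⟩
    set Pset := {z : Sym2 (Fin n) | ¬ z.IsDiag ∧ ∀ y ∈ z, y ∈ K} with hPset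
    have key : ∀ z ∈ Pset, z ∈ G.edgeSet := by
      intro z hz
      obtain ⟨hd, hm⟩ := hz
      induction z using Sym2.ind with
      | _ u v =>
        rw [Sym2.mk_isDiag_iff] at hd
        exact (G.mem_edgeSet).mpr (hKadj (hm u (by simp)) (hm v (by simp)) hd)
    set f : Sym2 (Fin n) → Fin n ⊕ G.edgeSet :=
      fun z => if h : z ∈ G.edgeSet then Sum.inr ⟨z, h⟩ else Sum.inl v0 with hf
    have hmaps : ∀ z ∈ Pset,
        f z ∈ actIter (incidenceGraph G)
            (Sum.elim (fun v => (G.neighborSet v).ncard) (fun _ => 2)) 1 (Sum.inl '' K) ∩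
          Set.range Sum.inr := by
      intro z hz
      have he := key z hz
      rw [hf]
      simp only [dif_pos he]
      constructor
      · right
        simp only [Set.mem_setOf_eq, Sum.elim_inr]
        rw [show actIter (incidenceGraph G)
            (Sum.elim (fun v => (G.neighborSet v).ncard) (fun _ => 2)) 0 (Sum.inl '' K)
            = Sum.inl '' K from rfl]
        rw [neighborSet_inr, ← Set.image_inter Sum.inl_injective]
        have hsub : {v : Fin n | v ∈ ((⟨z, he⟩ : G.edgeSet) : Sym2 (Fin n))} ∩ K
            = {v : Fin n | v ∈ ((⟨z, he⟩ : G.edgeSet) : Sym2 (Fin n))} :=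
          Set.inter_eq_left.mpr (fun y hy => hz.2 y hy)
        rw [hsub, Set.ncard_image_of_injective _ Sum.inl_injective, ncard_endpoints]
      · exact ⟨⟨z, he⟩, rfl⟩
    have hinjOn : Set.InjOn f Pset := by
      intro z1 h1 z2 h2 h
      rw [hf] at h
      simp only [dif_pos (key z1 h1), dif_pos (key z2 h2), Sum.inr.injEq,
        Subtype.mk.injEq] at h
      exact h
    calc k * (k - 1) / 2 = k.choose 2 := (Nat.choose_two_right k).symm
      _ = Pset.ncard := by rw [hPset, ncard_sym2_set, hKcard]
      _ ≤ _ := Set.ncard_le_ncard_of_injOn f hmaps hinjOn (Set.toFinite _)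
  · rintro ⟨S, hScard, hA⟩
    set SV := {v : Fin n | Sum.inl v ∈ S} with hSV
    set SE := {e : G.edgeSet | Sum.inr e ∈ S} with hSE
    set TT := {e : G.edgeSet | ∀ y ∈ (e : Sym2 (Fin n)), y ∈ SV} with hTTdef
    set PsetV := {z : Sym2 (Fin n) | ¬ z.IsDiag ∧ ∀ y ∈ z, y ∈ SV} with hPsetV
    have hSeq : Sum.inl '' SV ∪ Sum.inr '' SE = S := by
      ext x
      constructor
      · rintro (⟨v, hv, rfl⟩ | ⟨e, he, rfl⟩) <;> assumption
      · intro hx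
        rcases x with v | e
        · exact Or.inl ⟨v, hx, rfl⟩
        · exact Or.inr ⟨e, hx, rfl⟩
    have hab : SV.ncard + SE.ncard ≤ k := by
      have hd : Disjoint (Sum.inl '' SV) (Sum.inr '' SE) := by
        rw [Set.disjoint_left]
        rintro x ⟨v, _, rfl⟩ ⟨e, _, h⟩
        exact absurd h (by simp)
      calc SV.ncard + SE.ncard = (Sum.inl '' SV ∪ Sum.inr '' SE).ncard := by
            rw [Set.ncard_union_eq hd (Set.toFinite _) (Set.toFinite _),
              Set.ncard_image_of_injective _ Sum.inl_injective,
              Set.ncard_image_of_injective _ Sum.inr_injective]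
        _ = S.ncard := by rw [hSeq]
        _ ≤ k := hScard
    have hAsub : (actIter (incidenceGraph G)
            (Sum.elim (fun v => (G.neighborSet v).ncard) (fun _ => 2)) 1 S ∩
          Set.range Sum.inr) ⊆ Sum.inr '' SE ∪ Sum.inr '' TT := by
      rintro x ⟨hx, e, rfl⟩
      simp only [actIter, actStep, Set.mem_union, Set.mem_setOf_eq, Sum.elim_inr] at hx
      rcases hx with hx | hx
      · exact Or.inl ⟨e, hx, rfl⟩
      · right
        refine ⟨e, ?_, rfl⟩
        have hNS : (incidenceGraph G).neighborSet (Sum.inr e) ∩ S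
            = (incidenceGraph G).neighborSet (Sum.inr e) := by
          apply Set.eq_of_subset_of_ncard_le Set.inter_subset_left _ (Set.toFinite _)
          nth_rewrite 1 [neighborSet_inr]
          rw [Set.ncard_image_of_injective _ Sum.inl_injective, ncard_endpoints]
          exact hx
        intro y hy
        have h1 : Sum.inl y ∈ (incidenceGraph G).neighborSet (Sum.inr e) := by
          rw [neighborSet_inr]
          exact ⟨y, hy, rfl⟩
        rw [← hNS] at h1
        exact h1.2
    have hTT : TT.ncard ≤ SV.ncard.choose 2 := by
      have h1 : TT.ncard ≤ PsetV.ncard := by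
        apply Set.ncard_le_ncard_of_injOn (fun e : G.edgeSet => (e : Sym2 (Fin n)))
          ?_ (Set.injOn_of_injective Subtype.val_injective) (Set.toFinite _)
        intro e he
        exact ⟨G.not_isDiag_of_mem_edgeSet e.2, he⟩
      rw [hPsetV, ncard_sym2_set] at h1
      exact h1
    have hcount : k.choose 2 ≤ SE.ncard + TT.ncard := by
      calc k.choose 2 = k * (k - 1) / 2 := Nat.choose_two_right k
        _ ≤ _ := hA
        _ ≤ (Sum.inr '' SE ∪ Sum.inr '' TT).ncard :=
            Set.ncard_le_ncard hAsub (Set.toFinite _)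
        _ ≤ (Sum.inr '' SE).ncard + (Sum.inr '' TT).ncard := Set.ncard_union_le _ _
        _ = SE.ncard + TT.ncard := by
            rw [Set.ncard_image_of_injective _ Sum.inr_injective,
              Set.ncard_image_of_injective _ Sum.inr_injective]
    have hak : SV.ncard = k := by
      by_contra hne
      have ha : SV.ncard + 1 ≤ k := by omega
      have hlt := choose_two_lt hk ha
      omega
    have hb0 : SE.ncard = 0 := by omega
    refine ⟨SV, hak, ?_⟩
    intro u hu v hv huv
    by_contra hadj
    have hmem : s(u, v) ∈ PsetV := by
      refine ⟨by rw [Sym2.mk_isDiag_iff]; exact huv, ?_⟩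
      intro y hy
      rw [Sym2.mem_iff] at hy
      rcases hy with rfl | rfl <;> assumption
    have hTT2 : TT.ncard ≤ SV.ncard.choose 2 - 1 := by
      have h1 : TT.ncard ≤ (PsetV \ {s(u, v)}).ncard := by
        apply Set.ncard_le_ncard_of_injOn (fun e : G.edgeSet => (e : Sym2 (Fin n)))
          ?_ (Set.injOn_of_injective Subtype.val_injective) (Set.toFinite _)
        intro e he
        refine ⟨⟨G.not_isDiag_of_mem_edgeSet e.2, he⟩, ?_⟩
        simp only [Set.mem_singleton_iff]
        intro h
        apply hadj
        have := e.2
        rw [h, SimpleGraph.mem_edgeSet] at this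
        exact this
      rw [Set.ncard_diff_singleton_of_mem hmem, hPsetV,
        ncard_sym2_set] at h1
      exact h1
    rw [hak] at hTT2
    have h6 := add_two_le_choose hk
    omega
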